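/- For any two policies π and π', the relative entropy between their discounted state-action occupancy measures is bounded by the conditional relative entropy as follows: KL(μ^π ‖ μ^{π'}) ≤ (1/(1−γ)) · H(π ‖ π'). -/

import Mathlib

open scoped ENNReal

open Classical in
noncomputable def phi (a b : ℝ) : ℝ := if a = 0 then 0 else a * Real.log (a / b)

lemma phi_zero (b : ℝ) : phi 0 b = 0 := by simp [phi]

lemma phi_self (a : ℝ) : phi a a = 0 := by
  rcases eq_or_ne a 0 with h | h <;> simp [phi, h]

lemma phi_of_ne (a b : ℝ) (h : a ≠ 0) : phi a b = a * Real.log (a / b) := by simp [phi, h]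

lemma phi_smul (c a b : ℝ) (hc : 0 ≤ c) : phi (c * a) (c * b) = c * phi a b := by
  rcases eq_or_ne c 0 with h | h
  · simp [h, phi_zero]
  rcases eq_or_ne a 0 with h2 | h2
  · simp [h2, phi_zero]
  rw [phi_of_ne _ _ (mul_ne_zero h h2), phi_of_ne _ _ h2, mul_div_mul_left _ _ h]
  ring

lemma phi_smul' (c a b : ℝ) (hc : 0 ≤ c) : phi (a * c) (b * c) = c * phi a b := by
  rw [mul_comm a c, mul_comm b c, phi_smul c a b hc]

lemma phi_mul {d d' p p' : ℝ} (hd : 0 < d) (hd' : 0 < d') (hp : 0 ≤ p) (hp' : 0 ≤ p')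
    (hac : p' = 0 → p = 0) :
    phi (d * p) (d' * p') = d * p * Real.log (d / d') + d * phi p p' := by
  rcases eq_or_ne p 0 with h | h
  · simp [h, phi_zero]
  have hp2 : 0 < p := lt_of_le_of_ne hp (Ne.symm h)
  have hp2' : 0 < p' := lt_of_le_of_ne hp' (fun e => h (hac e.symm))
  rw [phi_of_ne _ _ (by positivity : d * p ≠ 0), phi_of_ne _ _ h, mul_div_mul_comm,
    Real.log_mul (by positivity) (by positivity)]
  ring

lemma phi_lower {a b : ℝ} (ha : 0 ≤ a) (hb : 0 ≤ b) (hab : b = 0 → a = 0) :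
    a - b ≤ phi a b := by
  rcases eq_or_ne a 0 with h | h
  · simp only [h, phi_zero]; linarith
  have ha' : 0 < a := lt_of_le_of_ne ha (Ne.symm h)
  have hb' : 0 < b := lt_of_le_of_ne hb (fun e => h (hab e.symm))
  rw [phi_of_ne _ _ h]
  have hlog : 1 - b / a ≤ Real.log (a / b) := by
    have h1 := Real.log_le_sub_one_of_pos (show (0:ℝ) < b / a by positivity)
    have h2 : Real.log (b / a) = - Real.log (a / b) := by
      rw [← Real.log_inv, inv_div]
    linarith
  have h2 : a * (1 - b / a) ≤ a * Real.log (a / b) := mul_le_mul_of_nonneg_left hlog ha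
  have h3 : a * (1 - b / a) = a - b := by field_simp
  linarith

lemma phi_key {A B : ℝ} (a b : ℝ) (hA : 0 < A) (hB : 0 < B) (ha : 0 ≤ a) (hb : 0 ≤ b)
    (hab : b = 0 → a = 0) :
    a * Real.log (A / B) + a - A / B * b ≤ phi a b := by
  rcases eq_or_ne a 0 with h | h
  · simp only [h, phi_zero, zero_mul, zero_add, zero_sub, neg_nonpos]
    positivity
  have ha' : 0 < a := lt_of_le_of_ne ha (Ne.symm h)
  have hb' : 0 < b := lt_of_le_of_ne hb (fun e => h (hab e.symm))
  rw [phi_of_ne _ _ h]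
  set u : ℝ := (a * B) / (b * A) with hu
  have hu' : 0 < u := by positivity
  have hlog : 1 - u⁻¹ ≤ Real.log u := by
    have := Real.log_le_sub_one_of_pos (inv_pos.mpr hu')
    rw [Real.log_inv] at this
    linarith
  have hABu : A / B * u = a / b := by rw [hu]; field_simp
  have hsplit : Real.log (a / b) = Real.log (A / B) + Real.log u := by
    rw [← hABu, Real.log_mul (by positivity) (ne_of_gt hu')]
  rw [hsplit]
  have h2 : a * (1 - u⁻¹) ≤ a * Real.log u := by
    exact mul_le_mul_of_nonneg_left hlog ha
  have h3 : a * (1 - u⁻¹) = a - A / B * b := by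
    rw [hu]
    field_simp
  nlinarith

lemma logsum_fin {ι : Type*} (s : Finset ι) (a b : ι → ℝ)
    (ha : ∀ i ∈ s, 0 ≤ a i) (hb : ∀ i ∈ s, 0 ≤ b i)
    (hab : ∀ i ∈ s, b i = 0 → a i = 0) :
    phi (∑ i ∈ s, a i) (∑ i ∈ s, b i) ≤ ∑ i ∈ s, phi (a i) (b i) := by
  set A := ∑ i ∈ s, a i with hA
  set B := ∑ i ∈ s, b i with hB
  rcases eq_or_ne A 0 with h | h
  · have hz : ∀ i ∈ s, a i = 0 := (Finset.sum_eq_zero_iff_of_nonneg ha).mp (hA ▸ h)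
    rw [h, phi_zero]
    exact Finset.sum_nonneg fun i hi => by rw [hz i hi, phi_zero]
  have hA' : 0 < A := lt_of_le_of_ne (Finset.sum_nonneg ha) (Ne.symm h)
  have hB' : 0 < B := by
    rcases eq_or_ne B 0 with h2 | h2
    · exfalso
      have hz : ∀ i ∈ s, b i = 0 := (Finset.sum_eq_zero_iff_of_nonneg hb).mp h2
      exact h (Finset.sum_eq_zero fun i hi => hab i hi (hz i hi))
    · exact lt_of_le_of_ne (Finset.sum_nonneg hb) (Ne.symm h2)
  calc phi A B = A * Real.log (A / B) := phi_of_ne _ _ h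
    _ = ∑ i ∈ s, (a i * Real.log (A / B) + a i - A / B * b i) := by
        rw [Finset.sum_sub_distrib, Finset.sum_add_distrib, ← Finset.sum_mul,
          ← Finset.mul_sum, ← hA, ← hB]
        field_simp
        ring
    _ ≤ ∑ i ∈ s, phi (a i) (b i) := Finset.sum_le_sum fun i hi =>
        phi_key _ _ hA' hB' (ha i hi) (hb i hi) (hab i hi)

lemma gibbs_fin {ι : Type*} (s : Finset ι) (a b : ι → ℝ)
    (ha : ∀ i ∈ s, 0 ≤ a i) (hb : ∀ i ∈ s, 0 ≤ b i)
    (hab : ∀ i ∈ s, b i = 0 → a i = 0) (hs : ∑ i ∈ s, a i = ∑ i ∈ s, b i) :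
    0 ≤ ∑ i ∈ s, phi (a i) (b i) := by
  have := logsum_fin s a b ha hb hab
  rw [hs, phi_self] at this
  exact this

lemma logsum_tsum (a b : ℕ → ℝ) (ha : ∀ t, 0 ≤ a t) (hb : ∀ t, 0 ≤ b t)
    (hab : ∀ t, b t = 0 → a t = 0) (hsa : Summable a) (hsb : Summable b)
    (hsphi : Summable fun t => phi (a t) (b t)) :
    phi (∑' t, a t) (∑' t, b t) ≤ ∑' t, phi (a t) (b t) := by
  set A := ∑' t, a t with hA
  set B := ∑' t, b t with hB
  rcases eq_or_ne A 0 with h | h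
  · have hz : ∀ t, a t = 0 := fun t =>
      le_antisymm (h ▸ Summable.le_tsum hsa t fun j _ => ha j) (ha t)
    rw [h, phi_zero]
    exact tsum_nonneg fun t => by rw [hz t, phi_zero]
  have hA' : 0 < A := lt_of_le_of_ne (tsum_nonneg ha) (Ne.symm h)
  have hB' : 0 < B := by
    rcases eq_or_ne B 0 with h2 | h2
    · exfalso
      apply h
      have hz : ∀ t, b t = 0 := fun t =>
        le_antisymm (h2 ▸ Summable.le_tsum hsb t fun j _ => hb j) (hb t)
      calc A = ∑' t, (0:ℝ) := tsum_congr fun t => hab t (hz t)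
        _ = 0 := tsum_zero
    · exact lt_of_le_of_ne (tsum_nonneg hb) (Ne.symm h2)
  have key : ∀ t, a t * Real.log (A / B) + a t - A / B * b t ≤ phi (a t) (b t) :=
    fun t => phi_key _ _ hA' hB' (ha t) (hb t) (hab t)
  have hsl : Summable (fun t => a t * Real.log (A / B) + a t - A / B * b t) := by
    exact ((hsa.mul_right _).add hsa).sub (hsb.mul_left _)
  calc phi A B = A * Real.log (A / B) := phi_of_ne _ _ h
    _ = ∑' t, (a t * Real.log (A / B) + a t - A / B * b t) := by
        rw [Summable.tsum_sub ((hsa.mul_right _).add hsa) (hsb.mul_left _),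
          Summable.tsum_add (hsa.mul_right _) hsa, tsum_mul_right, tsum_mul_left, ← hA, ← hB]
        field_simp
        ring
    _ ≤ ∑' t, phi (a t) (b t) := Summable.tsum_le_tsum key hsl hsphi

/-- The state distribution of the Markov chain induced by policy `π`:
`stateDist P ν₀ π t x = Pr_π[X_t = x]`. -/
noncomputable def stateDist {X A : Type*} [Fintype X] [Fintype A]
    (P : X → A → X → ℝ) (ν₀ : X → ℝ) (π : X → A → ℝ) : ℕ → X → ℝ
  | 0 => ν₀
  | t + 1 => fun x' => ∑ x, ∑ a, stateDist P ν₀ π t x * π x a * P x a x'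

/-- The normalized discounted state-action occupancy measure
`μ^π(x,a) = (1−γ) Σ_{t≥0} γ^t Pr_π[X_t = x, A_t = a]`. -/
noncomputable def occ {X A : Type*} [Fintype X] [Fintype A]
    (γ : ℝ) (P : X → A → X → ℝ) (ν₀ : X → ℝ) (π : X → A → ℝ) (x : X) (a : A) : ℝ :=
  (1 - γ) * ∑' t : ℕ, γ ^ t * stateDist P ν₀ π t x * π x a

section MDP

variable {X A : Type*} [Fintype X] [Fintype A]
variable (γ : ℝ) (P : X → A → X → ℝ) (ν₀ : X → ℝ) (π : X → A → ℝ)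

noncomputable def nu (x : X) : ℝ := (1 - γ) * ∑' t : ℕ, γ ^ t * stateDist P ν₀ π t x

variable {γ P ν₀ π}

lemma sd_nonneg (hν0 : ∀ x, 0 ≤ ν₀ x) (hπ0 : ∀ x a, 0 ≤ π x a)
    (hP0 : ∀ x a x', 0 ≤ P x a x') : ∀ t x, 0 ≤ stateDist P ν₀ π t x := by
  intro t
  induction t with
  | zero => exact hν0
  | succ t ih =>
    intro x'
    exact Finset.sum_nonneg fun x _ => Finset.sum_nonneg fun a _ =>
      mul_nonneg (mul_nonneg (ih x) (hπ0 x a)) (hP0 x a x')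

lemma sd_sum (hν0 : ∀ x, 0 ≤ ν₀ x) (hν1 : ∑ x, ν₀ x = 1) (hπ1 : ∀ x, ∑ a, π x a = 1)
    (hP1 : ∀ x a, ∑ x', P x a x' = 1) : ∀ t, ∑ x, stateDist P ν₀ π t x = 1 := by
  intro t
  induction t with
  | zero => exact hν1
  | succ t ih =>
    have hrow : ∀ (x : X) (a : A), ∑ x', stateDist P ν₀ π t x * π x a * P x a x'
        = stateDist P ν₀ π t x * π x a := by
      intro x a; rw [← Finset.mul_sum, hP1, mul_one]
    calc ∑ x', ∑ x, ∑ a, stateDist P ν₀ π t x * π x a * P x a x'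
        = ∑ x, ∑ a, ∑ x', stateDist P ν₀ π t x * π x a * P x a x' := by
          rw [Finset.sum_comm]
          exact Finset.sum_congr rfl fun x _ => Finset.sum_comm
      _ = ∑ x, ∑ a, stateDist P ν₀ π t x * π x a := by simp_rw [hrow]
      _ = ∑ x, stateDist P ν₀ π t x := by simp_rw [← Finset.mul_sum, hπ1, mul_one]
      _ = 1 := ih

lemma sd_le_one (hν0 : ∀ x, 0 ≤ ν₀ x) (hν1 : ∑ x, ν₀ x = 1) (hπ0 : ∀ x a, 0 ≤ π x a)
    (hπ1 : ∀ x, ∑ a, π x a = 1) (hP0 : ∀ x a x', 0 ≤ P x a x')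
    (hP1 : ∀ x a, ∑ x', P x a x' = 1) : ∀ t x, stateDist P ν₀ π t x ≤ 1 := by
  intro t x
  calc stateDist P ν₀ π t x ≤ ∑ y, stateDist P ν₀ π t y :=
        Finset.single_le_sum (fun y _ => sd_nonneg hν0 hπ0 hP0 t y) (Finset.mem_univ x)
    _ = 1 := sd_sum hν0 hν1 hπ1 hP1 t

lemma sd_summable (hγ0 : 0 < γ) (hγ1 : γ < 1) (hν0 : ∀ x, 0 ≤ ν₀ x) (hν1 : ∑ x, ν₀ x = 1)
    (hπ0 : ∀ x a, 0 ≤ π x a) (hπ1 : ∀ x, ∑ a, π x a = 1) (hP0 : ∀ x a x', 0 ≤ P x a x')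
    (hP1 : ∀ x a, ∑ x', P x a x' = 1) (x : X) :
    Summable (fun t => γ ^ t * stateDist P ν₀ π t x) := by
  apply Summable.of_nonneg_of_le
    (fun t => mul_nonneg (pow_nonneg hγ0.le t) (sd_nonneg hν0 hπ0 hP0 t x))
    (fun t => ?_) (summable_geometric_of_lt_one hγ0.le hγ1)
  calc γ ^ t * stateDist P ν₀ π t x ≤ γ ^ t * 1 := by
        have := sd_le_one hν0 hν1 hπ0 hπ1 hP0 hP1 t x
        have h2 : (0:ℝ) ≤ γ ^ t := by positivity
        nlinarith
    _ = γ ^ t := mul_one _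

lemma occ_eq (x : X) (a : A) : occ γ P ν₀ π x a = nu γ P ν₀ π x * π x a := by
  unfold occ nu
  rw [mul_assoc, ← tsum_mul_right]

lemma nu_nonneg (hγ0 : 0 < γ) (hγ1 : γ < 1) (hν0 : ∀ x, 0 ≤ ν₀ x) (hπ0 : ∀ x a, 0 ≤ π x a)
    (hP0 : ∀ x a x', 0 ≤ P x a x') (x : X) : 0 ≤ nu γ P ν₀ π x := by
  unfold nu
  have h1 : (0:ℝ) ≤ 1 - γ := by linarith
  exact mul_nonneg h1 (tsum_nonneg fun t =>
    mul_nonneg (pow_nonneg hγ0.le t) (sd_nonneg hν0 hπ0 hP0 t x))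

lemma nu_pos_of (hγ0 : 0 < γ) (hγ1 : γ < 1) (hν0 : ∀ x, 0 ≤ ν₀ x) (hν1 : ∑ x, ν₀ x = 1)
    (hπ0 : ∀ x a, 0 ≤ π x a) (hπ1 : ∀ x, ∑ a, π x a = 1) (hP0 : ∀ x a x', 0 ≤ P x a x')
    (hP1 : ∀ x a, ∑ x', P x a x' = 1) {t : ℕ} {x : X} (h : stateDist P ν₀ π t x ≠ 0) :
    0 < nu γ P ν₀ π x := by
  have hd := sd_nonneg hν0 hπ0 hP0
  have hd' : 0 < stateDist P ν₀ π t x := lt_of_le_of_ne (hd t x) (Ne.symm h)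
  have hle : γ ^ t * stateDist P ν₀ π t x ≤ ∑' s, γ ^ s * stateDist P ν₀ π s x :=
    Summable.le_tsum (sd_summable hγ0 hγ1 hν0 hν1 hπ0 hπ1 hP0 hP1 x) t fun s _ =>
      mul_nonneg (pow_nonneg hγ0.le s) (hd s x)
  have h2 : 0 < γ ^ t * stateDist P ν₀ π t x := by positivity
  unfold nu
  have h3 : (0:ℝ) < 1 - γ := by linarith
  nlinarith

lemma nu_sum (hγ0 : 0 < γ) (hγ1 : γ < 1) (hν0 : ∀ x, 0 ≤ ν₀ x) (hν1 : ∑ x, ν₀ x = 1)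
    (hπ0 : ∀ x a, 0 ≤ π x a) (hπ1 : ∀ x, ∑ a, π x a = 1) (hP0 : ∀ x a x', 0 ≤ P x a x')
    (hP1 : ∀ x a, ∑ x', P x a x' = 1) : ∑ x, nu γ P ν₀ π x = 1 := by
  unfold nu
  rw [← Finset.mul_sum, ← Summable.tsum_finsetSum (fun x _ => sd_summable hγ0 hγ1 hν0 hν1 hπ0 hπ1 hP0 hP1 x)]
  have : ∀ t : ℕ, ∑ x, γ ^ t * stateDist P ν₀ π t x = γ ^ t := by
    intro t
    rw [← Finset.mul_sum, sd_sum hν0 hν1 hπ1 hP1, mul_one]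
  rw [tsum_congr this, tsum_geometric_of_lt_one hγ0.le hγ1]
  exact mul_inv_cancel₀ (by linarith : (1:ℝ) - γ ≠ 0)

end MDP

section MDP2

variable {X A : Type*} [Fintype X] [Fintype A]
variable (γ : ℝ) (P : X → A → X → ℝ) (ν₀ : X → ℝ) (π π' : X → A → ℝ)

open Classical in
noncomputable def klp (x : X) : ℝ :=
  if nu γ P ν₀ π x = 0 then 0 else ∑ a, phi (π x a) (π' x a)

noncomputable def cc (t : ℕ) : ℝ := ∑ x, stateDist P ν₀ π t x * klp γ P ν₀ π π' x

variable {γ P ν₀ π π'}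
variable (hγ0 : 0 < γ) (hγ1 : γ < 1)
    (hP0 : ∀ x a x', 0 ≤ P x a x') (hP1 : ∀ x a, ∑ x', P x a x' = 1)
    (hν0 : ∀ x, 0 ≤ ν₀ x) (hν1 : ∑ x, ν₀ x = 1)
    (hπ0 : ∀ x a, 0 ≤ π x a) (hπ1 : ∀ x, ∑ a, π x a = 1)
    (hπ'0 : ∀ x a, 0 ≤ π' x a) (hπ'1 : ∀ x, ∑ a, π' x a = 1)
    (hAC : ∀ x, nu γ P ν₀ π x ≠ 0 → ∀ a, π' x a = 0 → π x a = 0)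

include hγ0 hγ1 hP0 hP1 hν0 hν1 hπ0 hπ1 hπ'0 hπ'1 hAC

lemma ac_states : ∀ t x, stateDist P ν₀ π' t x = 0 → stateDist P ν₀ π t x = 0 := by
  intro t
  induction t with
  | zero => exact fun x h => h
  | succ t ih =>
    intro x' h
    by_contra hne
    have hrw : stateDist P ν₀ π (t+1) x'
        = ∑ x, ∑ a, stateDist P ν₀ π t x * π x a * P x a x' := rfl
    rw [hrw] at hne
    obtain ⟨x, -, hx⟩ := Finset.exists_ne_zero_of_sum_ne_zero hne
    obtain ⟨a, -, ha⟩ := Finset.exists_ne_zero_of_sum_ne_zero hx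
    have hdt : stateDist P ν₀ π t x ≠ 0 := fun e => ha (by rw [e]; ring)
    have hπa : π x a ≠ 0 := fun e => ha (by rw [e]; ring)
    have hPa : P x a x' ≠ 0 := fun e => ha (by rw [e]; ring)
    have hnu : nu γ P ν₀ π x ≠ 0 :=
      (nu_pos_of hγ0 hγ1 hν0 hν1 hπ0 hπ1 hP0 hP1 hdt).ne'
    have hπ'a : π' x a ≠ 0 := fun e => hπa (hAC x hnu a e)
    have hd't : stateDist P ν₀ π' t x ≠ 0 := fun e => hdt (ih x e)
    have hrw' : stateDist P ν₀ π' (t+1) x'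
        = ∑ x, ∑ a, stateDist P ν₀ π' t x * π' x a * P x a x' := rfl
    rw [hrw'] at h
    have hz := (Finset.sum_eq_zero_iff_of_nonneg (fun y _ => Finset.sum_nonneg fun b _ =>
      mul_nonneg (mul_nonneg (sd_nonneg hν0 hπ'0 hP0 t y) (hπ'0 y b)) (hP0 y b x'))).mp h
      x (Finset.mem_univ x)
    have hz2 := (Finset.sum_eq_zero_iff_of_nonneg (fun b _ =>
      mul_nonneg (mul_nonneg (sd_nonneg hν0 hπ'0 hP0 t x) (hπ'0 x b)) (hP0 x b x'))).mp hz
      a (Finset.mem_univ a)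
    exact (mul_ne_zero (mul_ne_zero hd't hπ'a) hPa) hz2

lemma klp_nonneg (x : X) : 0 ≤ klp γ P ν₀ π π' x := by
  unfold klp
  split_ifs with h
  · exact le_rfl
  · exact gibbs_fin _ _ _ (fun a _ => hπ0 x a) (fun a _ => hπ'0 x a)
      (fun a _ => hAC x h a) (by rw [hπ1, hπ'1])

lemma chain_x (t : ℕ) (x : X) :
    ∑ a, phi (stateDist P ν₀ π t x * π x a) (stateDist P ν₀ π' t x * π' x a)
      = phi (stateDist P ν₀ π t x) (stateDist P ν₀ π' t x)
        + stateDist P ν₀ π t x * klp γ P ν₀ π π' x := by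
  rcases eq_or_ne (stateDist P ν₀ π t x) 0 with h | h
  · simp [h, phi_zero]
  have hd : 0 < stateDist P ν₀ π t x := lt_of_le_of_ne (sd_nonneg hν0 hπ0 hP0 t x) (Ne.symm h)
  have hd'ne : stateDist P ν₀ π' t x ≠ 0 :=
    fun e => h (ac_states hγ0 hγ1 hP0 hP1 hν0 hν1 hπ0 hπ1 hπ'0 hπ'1 hAC t x e)
  have hd' : 0 < stateDist P ν₀ π' t x :=
    lt_of_le_of_ne (sd_nonneg hν0 hπ'0 hP0 t x) (Ne.symm hd'ne)
  have hnu : nu γ P ν₀ π x ≠ 0 := (nu_pos_of hγ0 hγ1 hν0 hν1 hπ0 hπ1 hP0 hP1 h).ne'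
  have hklp : klp γ P ν₀ π π' x = ∑ a, phi (π x a) (π' x a) := by
    unfold klp; rw [if_neg hnu]
  rw [hklp]
  calc ∑ a, phi (stateDist P ν₀ π t x * π x a) (stateDist P ν₀ π' t x * π' x a)
      = ∑ a, (stateDist P ν₀ π t x * π x a
            * Real.log (stateDist P ν₀ π t x / stateDist P ν₀ π' t x)
          + stateDist P ν₀ π t x * phi (π x a) (π' x a)) :=
        Finset.sum_congr rfl fun a _ =>
          phi_mul hd hd' (hπ0 x a) (hπ'0 x a) (hAC x hnu a)
    _ = phi (stateDist P ν₀ π t x) (stateDist P ν₀ π' t x)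
        + stateDist P ν₀ π t x * ∑ a, phi (π x a) (π' x a) := by
        rw [Finset.sum_add_distrib, ← Finset.mul_sum, phi_of_ne _ _ h]
        congr 1
        have : ∀ a, stateDist P ν₀ π t x * π x a
            * Real.log (stateDist P ν₀ π t x / stateDist P ν₀ π' t x)
            = stateDist P ν₀ π t x
            * Real.log (stateDist P ν₀ π t x / stateDist P ν₀ π' t x) * π x a := by
          intro a; ring
        rw [Finset.sum_congr rfl fun a _ => this a, ← Finset.mul_sum, hπ1, mul_one]

lemma kl_step (t : ℕ) :
    ∑ x, phi (stateDist P ν₀ π (t+1) x) (stateDist P ν₀ π' (t+1) x)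
      ≤ (∑ x, phi (stateDist P ν₀ π t x) (stateDist P ν₀ π' t x)) + cc γ P ν₀ π π' t := by
  have hstep1 : ∀ x' : X, phi (stateDist P ν₀ π (t+1) x') (stateDist P ν₀ π' (t+1) x')
      ≤ ∑ p : X × A, phi (stateDist P ν₀ π t p.1 * π p.1 p.2 * P p.1 p.2 x')
          (stateDist P ν₀ π' t p.1 * π' p.1 p.2 * P p.1 p.2 x') := by
    intro x'
    have hrw : stateDist P ν₀ π (t+1) x'
        = ∑ p : X × A, stateDist P ν₀ π t p.1 * π p.1 p.2 * P p.1 p.2 x' := by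
      rw [Fintype.sum_prod_type]; rfl
    have hrw' : stateDist P ν₀ π' (t+1) x'
        = ∑ p : X × A, stateDist P ν₀ π' t p.1 * π' p.1 p.2 * P p.1 p.2 x' := by
      rw [Fintype.sum_prod_type]; rfl
    rw [hrw, hrw']
    apply logsum_fin
    · exact fun p _ => mul_nonneg (mul_nonneg (sd_nonneg hν0 hπ0 hP0 t p.1) (hπ0 p.1 p.2))
        (hP0 p.1 p.2 x')
    · exact fun p _ => mul_nonneg (mul_nonneg (sd_nonneg hν0 hπ'0 hP0 t p.1) (hπ'0 p.1 p.2))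
        (hP0 p.1 p.2 x')
    · rintro ⟨x, a⟩ - hz
      rcases mul_eq_zero.mp hz with hz2 | hz2
      · rcases mul_eq_zero.mp hz2 with hz3 | hz3
        · rw [ac_states hγ0 hγ1 hP0 hP1 hν0 hν1 hπ0 hπ1 hπ'0 hπ'1 hAC t x hz3]; ring
        · rcases eq_or_ne (stateDist P ν₀ π t x) 0 with h4 | h4
          · rw [h4]; ring
          · rw [hAC x (nu_pos_of hγ0 hγ1 hν0 hν1 hπ0 hπ1 hP0 hP1 h4).ne' a hz3]; ring
      · rw [hz2]; ring
  calc ∑ x', phi (stateDist P ν₀ π (t+1) x') (stateDist P ν₀ π' (t+1) x')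
      ≤ ∑ x', ∑ p : X × A, phi (stateDist P ν₀ π t p.1 * π p.1 p.2 * P p.1 p.2 x')
          (stateDist P ν₀ π' t p.1 * π' p.1 p.2 * P p.1 p.2 x') :=
        Finset.sum_le_sum fun x' _ => hstep1 x'
    _ = ∑ p : X × A, ∑ x', phi (stateDist P ν₀ π t p.1 * π p.1 p.2 * P p.1 p.2 x')
          (stateDist P ν₀ π' t p.1 * π' p.1 p.2 * P p.1 p.2 x') := Finset.sum_comm
    _ = ∑ p : X × A, phi (stateDist P ν₀ π t p.1 * π p.1 p.2)
          (stateDist P ν₀ π' t p.1 * π' p.1 p.2) := by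
        apply Finset.sum_congr rfl
        rintro ⟨x, a⟩ -
        calc ∑ x', phi (stateDist P ν₀ π t x * π x a * P x a x')
              (stateDist P ν₀ π' t x * π' x a * P x a x')
            = ∑ x', P x a x' * phi (stateDist P ν₀ π t x * π x a)
                (stateDist P ν₀ π' t x * π' x a) :=
              Finset.sum_congr rfl fun x' _ => phi_smul' _ _ _ (hP0 x a x')
          _ = _ := by rw [← Finset.sum_mul, hP1, one_mul]
    _ = ∑ x, ∑ a, phi (stateDist P ν₀ π t x * π x a)
          (stateDist P ν₀ π' t x * π' x a) := by rw [Fintype.sum_prod_type]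
    _ = ∑ x, (phi (stateDist P ν₀ π t x) (stateDist P ν₀ π' t x)
          + stateDist P ν₀ π t x * klp γ P ν₀ π π' x) :=
        Finset.sum_congr rfl fun x _ =>
          chain_x hγ0 hγ1 hP0 hP1 hν0 hν1 hπ0 hπ1 hπ'0 hπ'1 hAC t x
    _ = _ := by rw [Finset.sum_add_distrib]; rfl

lemma kl_cum (t : ℕ) :
    ∑ x, phi (stateDist P ν₀ π t x) (stateDist P ν₀ π' t x)
      ≤ ∑ s ∈ Finset.range t, cc γ P ν₀ π π' s := by
  induction t with
  | zero =>
    simp only [Finset.range_zero, Finset.sum_empty]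
    have : ∀ x : X, phi (stateDist P ν₀ π 0 x) (stateDist P ν₀ π' 0 x) = 0 := fun x => phi_self _
    rw [Finset.sum_congr rfl fun x _ => this x, Finset.sum_const, smul_zero]
  | succ t ih =>
    rw [Finset.sum_range_succ]
    calc ∑ x, phi (stateDist P ν₀ π (t+1) x) (stateDist P ν₀ π' (t+1) x)
        ≤ (∑ x, phi (stateDist P ν₀ π t x) (stateDist P ν₀ π' t x)) + cc γ P ν₀ π π' t :=
          kl_step hγ0 hγ1 hP0 hP1 hν0 hν1 hπ0 hπ1 hπ'0 hπ'1 hAC t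
      _ ≤ _ := by linarith

end MDP2

section MDP3

variable {X A : Type*} [Fintype X] [Fintype A]
variable {γ : ℝ} {P : X → A → X → ℝ} {ν₀ : X → ℝ} {π π' : X → A → ℝ}
variable (hγ0 : 0 < γ) (hγ1 : γ < 1)
    (hP0 : ∀ x a x', 0 ≤ P x a x') (hP1 : ∀ x a, ∑ x', P x a x' = 1)
    (hν0 : ∀ x, 0 ≤ ν₀ x) (hν1 : ∑ x, ν₀ x = 1)
    (hπ0 : ∀ x a, 0 ≤ π x a) (hπ1 : ∀ x, ∑ a, π x a = 1)
    (hπ'0 : ∀ x a, 0 ≤ π' x a) (hπ'1 : ∀ x, ∑ a, π' x a = 1)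
    (hAC : ∀ x, nu γ P ν₀ π x ≠ 0 → ∀ a, π' x a = 0 → π x a = 0)

include hγ0 hγ1 hP0 hP1 hν0 hν1 hπ0 hπ1 hπ'0 hπ'1 hAC

lemma cc_nonneg (t : ℕ) : 0 ≤ cc γ P ν₀ π π' t :=
  Finset.sum_nonneg fun x _ => mul_nonneg (sd_nonneg hν0 hπ0 hP0 t x)
    (klp_nonneg hγ0 hγ1 hP0 hP1 hν0 hν1 hπ0 hπ1 hπ'0 hπ'1 hAC x)

lemma cc_le (t : ℕ) : cc γ P ν₀ π π' t ≤ ∑ x, klp γ P ν₀ π π' x :=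
  Finset.sum_le_sum fun x _ => by
    have h1 := sd_le_one hν0 hν1 hπ0 hπ1 hP0 hP1 t x
    have h2 := sd_nonneg hν0 hπ0 hP0 t x
    have h3 := klp_nonneg hγ0 hγ1 hP0 hP1 hν0 hν1 hπ0 hπ1 hπ'0 hπ'1 hAC x
    nlinarith

lemma kl_fin_le (t : ℕ) :
    ∑ x, phi (stateDist P ν₀ π t x) (stateDist P ν₀ π' t x)
      ≤ t * ∑ x, klp γ P ν₀ π π' x := by
  calc ∑ x, phi (stateDist P ν₀ π t x) (stateDist P ν₀ π' t x)
      ≤ ∑ s ∈ Finset.range t, cc γ P ν₀ π π' s :=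
        kl_cum hγ0 hγ1 hP0 hP1 hν0 hν1 hπ0 hπ1 hπ'0 hπ'1 hAC t
    _ ≤ ∑ _s ∈ Finset.range t, ∑ x, klp γ P ν₀ π π' x :=
        Finset.sum_le_sum fun s _ => cc_le hγ0 hγ1 hP0 hP1 hν0 hν1 hπ0 hπ1 hπ'0 hπ'1 hAC s
    _ = t * ∑ x, klp γ P ν₀ π π' x := by
        rw [Finset.sum_const, Finset.card_range, nsmul_eq_mul]

lemma Cmax_nonneg : 0 ≤ ∑ x, klp γ P ν₀ π π' x :=
  Finset.sum_nonneg fun x _ => klp_nonneg hγ0 hγ1 hP0 hP1 hν0 hν1 hπ0 hπ1 hπ'0 hπ'1 hAC x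

lemma phi_coord_bound (t : ℕ) (x : X) :
    |phi (stateDist P ν₀ π t x) (stateDist P ν₀ π' t x)|
      ≤ t * (∑ y, klp γ P ν₀ π π' y) + 1 := by
  classical
  have hCm := Cmax_nonneg hγ0 hγ1 hP0 hP1 hν0 hν1 hπ0 hπ1 hπ'0 hπ'1 hAC
  have hlow : ∀ y : X, stateDist P ν₀ π t y - stateDist P ν₀ π' t y
      ≤ phi (stateDist P ν₀ π t y) (stateDist P ν₀ π' t y) := fun y =>
    phi_lower (sd_nonneg hν0 hπ0 hP0 t y) (sd_nonneg hν0 hπ'0 hP0 t y)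
      (fun e => ac_states hγ0 hγ1 hP0 hP1 hν0 hν1 hπ0 hπ1 hπ'0 hπ'1 hAC t y e)
  have herase : -1 ≤ ∑ y ∈ Finset.univ.erase x,
      phi (stateDist P ν₀ π t y) (stateDist P ν₀ π' t y) := by
    have h1 : ∑ y ∈ Finset.univ.erase x,
        (stateDist P ν₀ π t y - stateDist P ν₀ π' t y)
        ≤ ∑ y ∈ Finset.univ.erase x,
        phi (stateDist P ν₀ π t y) (stateDist P ν₀ π' t y) :=
      Finset.sum_le_sum fun y _ => hlow y
    have h2 : ∑ y ∈ Finset.univ.erase x, stateDist P ν₀ π' t y ≤ 1 := by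
      rw [← sd_sum hν0 hν1 hπ'1 hP1 t]
      exact Finset.sum_le_sum_of_subset_of_nonneg (Finset.subset_univ _)
        fun y _ _ => sd_nonneg hν0 hπ'0 hP0 t y
    have h3 : 0 ≤ ∑ y ∈ Finset.univ.erase x, stateDist P ν₀ π t y :=
      Finset.sum_nonneg fun y _ => sd_nonneg hν0 hπ0 hP0 t y
    rw [Finset.sum_sub_distrib] at h1
    linarith
  have htot := Finset.sum_erase_add Finset.univ
    (fun y => phi (stateDist P ν₀ π t y) (stateDist P ν₀ π' t y)) (Finset.mem_univ x)
  have hklle := kl_fin_le hγ0 hγ1 hP0 hP1 hν0 hν1 hπ0 hπ1 hπ'0 hπ'1 hAC t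
  rw [abs_le]
  constructor
  · have := hlow x
    have h4 : stateDist P ν₀ π' t x ≤ 1 := sd_le_one hν0 hν1 hπ'0 hπ'1 hP0 hP1 t x
    have h5 : 0 ≤ stateDist P ν₀ π t x := sd_nonneg hν0 hπ0 hP0 t x
    have h6 : (0:ℝ) ≤ t * ∑ y, klp γ P ν₀ π π' y := by positivity
    linarith
  · linarith

lemma aux_summable (c : ℝ) : Summable (fun t : ℕ => (1-γ)*γ^t * (t*c+1)) := by
  have h1 : Summable (fun t : ℕ => ((t:ℝ))^1 * γ^t) :=
    summable_pow_mul_geometric_of_norm_lt_one 1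
      (by rwa [Real.norm_eq_abs, abs_of_pos hγ0])
  have h2 : Summable (fun t : ℕ => γ^t) := summable_geometric_of_lt_one hγ0.le hγ1
  have h3 := (h1.mul_left ((1-γ)*c)).add (h2.mul_left (1-γ))
  apply h3.congr
  intro t
  push_cast
  ring

lemma philist_summable (x : X) :
    Summable (fun t : ℕ => (1-γ)*γ^t
      * phi (stateDist P ν₀ π t x) (stateDist P ν₀ π' t x)) := by
  apply Summable.of_abs
  apply Summable.of_nonneg_of_le (fun t => abs_nonneg _) (fun t => ?_)
    (aux_summable hγ0 hγ1 hP0 hP1 hν0 hν1 hπ0 hπ1 hπ'0 hπ'1 hAC (∑ y, klp γ P ν₀ π π' y))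
  have hw : (0:ℝ) ≤ (1-γ)*γ^t := mul_nonneg (by linarith) (pow_nonneg hγ0.le t)
  rw [abs_mul, abs_of_nonneg hw]
  exact mul_le_mul_of_nonneg_left
    (phi_coord_bound hγ0 hγ1 hP0 hP1 hν0 hν1 hπ0 hπ1 hπ'0 hπ'1 hAC t x) hw

omit hπ'0 hπ'1 hAC in
lemma nu_eq_tsum (x : X) :
    nu γ P ν₀ π x = ∑' t : ℕ, (1-γ)*γ^t * stateDist P ν₀ π t x := by
  unfold nu
  rw [← tsum_mul_left]
  exact tsum_congr fun t => by ring

omit hπ'0 hπ'1 hAC in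
lemma sd_summable' (x : X) (c : ℝ) :
    Summable (fun t : ℕ => (1-γ)*γ^t * stateDist P ν₀ π t x * c) := by
  apply Summable.mul_right
  apply ((sd_summable hγ0 hγ1 hν0 hν1 hπ0 hπ1 hP0 hP1 x).mul_left (1-γ)).congr
  intro t; ring

lemma nu_ne {x : X} (h : nu γ P ν₀ π x ≠ 0) : nu γ P ν₀ π' x ≠ 0 := by
  have hts : (∑' t : ℕ, γ^t * stateDist P ν₀ π t x) ≠ 0 := by
    intro e; apply h; unfold nu; rw [e, mul_zero]
  have hex : ∃ t, γ^t * stateDist P ν₀ π t x ≠ 0 := by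
    by_contra hall
    push_neg at hall
    exact hts (by rw [tsum_congr hall, tsum_zero])
  obtain ⟨t, ht⟩ := hex
  have hd : stateDist P ν₀ π t x ≠ 0 := fun e => ht (by rw [e, mul_zero])
  have hd' : stateDist P ν₀ π' t x ≠ 0 :=
    fun e => hd (ac_states hγ0 hγ1 hP0 hP1 hν0 hν1 hπ0 hπ1 hπ'0 hπ'1 hAC t x e)
  exact (nu_pos_of hγ0 hγ1 hν0 hν1 hπ'0 hπ'1 hP0 hP1 hd').ne'

lemma chain_nu (x : X) :
    ∑ a, phi (nu γ P ν₀ π x * π x a) (nu γ P ν₀ π' x * π' x a)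
      = phi (nu γ P ν₀ π x) (nu γ P ν₀ π' x)
        + nu γ P ν₀ π x * klp γ P ν₀ π π' x := by
  rcases eq_or_ne (nu γ P ν₀ π x) 0 with h | h
  · simp [h, phi_zero]
  have hd : 0 < nu γ P ν₀ π x :=
    lt_of_le_of_ne (nu_nonneg hγ0 hγ1 hν0 hπ0 hP0 x) (Ne.symm h)
  have hd' : 0 < nu γ P ν₀ π' x :=
    lt_of_le_of_ne (nu_nonneg hγ0 hγ1 hν0 hπ'0 hP0 x)
      (Ne.symm (nu_ne hγ0 hγ1 hP0 hP1 hν0 hν1 hπ0 hπ1 hπ'0 hπ'1 hAC h))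
  have hklp : klp γ P ν₀ π π' x = ∑ a, phi (π x a) (π' x a) := by
    unfold klp; rw [if_neg h]
  rw [hklp]
  calc ∑ a, phi (nu γ P ν₀ π x * π x a) (nu γ P ν₀ π' x * π' x a)
      = ∑ a, (nu γ P ν₀ π x * π x a
            * Real.log (nu γ P ν₀ π x / nu γ P ν₀ π' x)
          + nu γ P ν₀ π x * phi (π x a) (π' x a)) :=
        Finset.sum_congr rfl fun a _ =>
          phi_mul hd hd' (hπ0 x a) (hπ'0 x a) (hAC x h a)
    _ = phi (nu γ P ν₀ π x) (nu γ P ν₀ π' x)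
        + nu γ P ν₀ π x * ∑ a, phi (π x a) (π' x a) := by
        rw [Finset.sum_add_distrib, ← Finset.mul_sum, phi_of_ne _ _ h]
        congr 1
        have hc : ∀ a, nu γ P ν₀ π x * π x a
            * Real.log (nu γ P ν₀ π x / nu γ P ν₀ π' x)
            = nu γ P ν₀ π x * Real.log (nu γ P ν₀ π x / nu γ P ν₀ π' x) * π x a := by
          intro a; ring
        rw [Finset.sum_congr rfl fun a _ => hc a, ← Finset.mul_sum, hπ1, mul_one]

omit hP0 hP1 hν0 hν1 hπ0 hπ1 hπ'0 hπ'1 hAC in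
lemma tail_geom (s : ℕ) :
    ∑' t : ℕ, (if s < t then (1-γ)*γ^t else 0) = γ^(s+1) := by
  classical
  have hi : Function.Injective (fun k : ℕ => k + (s+1)) := add_left_injective _
  have hsupp : Function.support (fun t : ℕ => if s < t then (1-γ)*γ^t else 0)
      ⊆ Set.range (fun k : ℕ => k + (s+1)) := by
    intro t ht
    by_contra hc
    apply ht
    show (if s < t then (1-γ)*γ^t else 0) = 0
    exact if_neg fun hst => hc ⟨t - (s+1), show t - (s+1) + (s+1) = t by omega⟩
  rw [← hi.tsum_eq hsupp]
  have hpt : ∀ k : ℕ, (if s < (fun k : ℕ => k + (s+1)) k then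
      (1-γ)*γ^((fun k : ℕ => k + (s+1)) k) else 0) = ((1-γ)*γ^(s+1))*γ^k := by
    intro k
    simp only
    rw [if_pos (by omega), pow_add]
    ring
  rw [tsum_congr hpt, tsum_mul_left, tsum_geometric_of_lt_one hγ0.le hγ1,
    mul_comm (1-γ) (γ^(s+1)), mul_assoc, mul_inv_cancel₀ (by linarith : (1:ℝ)-γ ≠ 0), mul_one]

lemma range_cc_le (t : ℕ) :
    ∑ s ∈ Finset.range t, cc γ P ν₀ π π' s ≤ t * ∑ x, klp γ P ν₀ π π' x := by
  calc ∑ s ∈ Finset.range t, cc γ P ν₀ π π' s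
      ≤ ∑ _s ∈ Finset.range t, ∑ x, klp γ P ν₀ π π' x :=
        Finset.sum_le_sum fun s _ => cc_le hγ0 hγ1 hP0 hP1 hν0 hν1 hπ0 hπ1 hπ'0 hπ'1 hAC s
    _ = t * ∑ x, klp γ P ν₀ π π' x := by
        rw [Finset.sum_const, Finset.card_range, nsmul_eq_mul]

lemma sum_cc_summable :
    Summable (fun t : ℕ => (1-γ)*γ^t * ∑ s ∈ Finset.range t, cc γ P ν₀ π π' s) := by
  have hw : ∀ t : ℕ, (0:ℝ) ≤ (1-γ)*γ^t :=
    fun t => mul_nonneg (by linarith) (pow_nonneg hγ0.le t)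
  apply Summable.of_nonneg_of_le
    (fun t => mul_nonneg (hw t) (Finset.sum_nonneg fun s _ =>
      cc_nonneg hγ0 hγ1 hP0 hP1 hν0 hν1 hπ0 hπ1 hπ'0 hπ'1 hAC s))
    (fun t => ?_)
    (aux_summable hγ0 hγ1 hP0 hP1 hν0 hν1 hπ0 hπ1 hπ'0 hπ'1 hAC (∑ x, klp γ P ν₀ π π' x))
  apply mul_le_mul_of_nonneg_left _ (hw t)
  have := range_cc_le hγ0 hγ1 hP0 hP1 hν0 hν1 hπ0 hπ1 hπ'0 hπ'1 hAC t
  linarith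

lemma fubini :
    ∑' t : ℕ, (1-γ)*γ^t * (∑ s ∈ Finset.range t, cc γ P ν₀ π π' s)
      = ∑' s : ℕ, cc γ P ν₀ π π' s * γ^(s+1) := by
  classical
  set F : ℕ → ℕ → ℝ := fun t s => if s < t then (1-γ)*γ^t * cc γ P ν₀ π π' s else 0 with hF
  have hccn : ∀ s, 0 ≤ cc γ P ν₀ π π' s :=
    fun s => cc_nonneg hγ0 hγ1 hP0 hP1 hν0 hν1 hπ0 hπ1 hπ'0 hπ'1 hAC s
  have hw : ∀ t : ℕ, (0:ℝ) ≤ (1-γ)*γ^t :=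
    fun t => mul_nonneg (by linarith) (pow_nonneg hγ0.le t)
  have hFn : ∀ t s, 0 ≤ F t s := by
    intro t s
    simp only [hF]
    split_ifs
    · exact mul_nonneg (hw t) (hccn s)
    · exact le_rfl
  have hrow : ∀ t, (1-γ)*γ^t * (∑ s ∈ Finset.range t, cc γ P ν₀ π π' s) = ∑' s, F t s := by
    intro t
    rw [Finset.mul_sum]
    have h1 : ∑' s, F t s = ∑ s ∈ Finset.range t, F t s :=
      tsum_eq_sum (fun s hs => by
        simp only [hF]; exact if_neg fun h => hs (Finset.mem_range.mpr h))
    rw [h1]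
    exact Finset.sum_congr rfl fun s hs => by
      simp only [hF]; rw [if_pos (Finset.mem_range.mp hs)]
  have hsum_row : ∀ t, Summable (F t) := fun t =>
    summable_of_ne_finset_zero (s := Finset.range t) (fun s hs => by
      simp only [hF]; exact if_neg fun h => hs (Finset.mem_range.mpr h))
  have hcol : ∀ s, Summable fun t => F t s := by
    intro s
    apply Summable.of_nonneg_of_le (fun t => hFn t s) (fun t => ?_)
      (((summable_geometric_of_lt_one hγ0.le hγ1)).mul_left ((1-γ) * cc γ P ν₀ π π' s))
    simp only [hF]
    split_ifs
    · exact le_of_eq (by ring)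
    · exact mul_nonneg (mul_nonneg (by linarith) (hccn s)) (pow_nonneg hγ0.le t)
  have huncurry : Summable (Function.uncurry F) := by
    apply (summable_prod_of_nonneg (fun p => hFn p.1 p.2)).mpr
    refine ⟨hsum_row, ?_⟩
    apply Summable.congr (sum_cc_summable hγ0 hγ1 hP0 hP1 hν0 hν1 hπ0 hπ1 hπ'0 hπ'1 hAC)
    exact hrow
  calc ∑' t : ℕ, (1-γ)*γ^t * (∑ s ∈ Finset.range t, cc γ P ν₀ π π' s)
      = ∑' t, ∑' s, F t s := tsum_congr hrow
    _ = ∑' s, ∑' t, F t s := (Summable.tsum_comm' huncurry hsum_row hcol).symm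
    _ = ∑' s, cc γ P ν₀ π π' s * γ^(s+1) := by
        apply tsum_congr
        intro s
        have hpt : ∀ t, F t s = cc γ P ν₀ π π' s * (if s < t then (1-γ)*γ^t else 0) := by
          intro t
          simp only [hF]
          split_ifs
          · ring
          · rw [mul_zero]
        rw [tsum_congr hpt, tsum_mul_left, tail_geom hγ0 hγ1 s]

lemma Hr_eq : ∑ x, nu γ P ν₀ π x * klp γ P ν₀ π π' x
    = ∑' t : ℕ, (1-γ)*γ^t * cc γ P ν₀ π π' t := by
  have hx : ∀ x : X, nu γ P ν₀ π x * klp γ P ν₀ π π' x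
      = ∑' t : ℕ, (1-γ)*γ^t * stateDist P ν₀ π t x * klp γ P ν₀ π π' x := by
    intro x
    rw [nu_eq_tsum hγ0 hγ1 hP0 hP1 hν0 hν1 hπ0 hπ1 x, ← tsum_mul_right]
  rw [Finset.sum_congr rfl (fun x _ => hx x),
    ← Summable.tsum_finsetSum (fun x _ => sd_summable' hγ0 hγ1 hP0 hP1 hν0 hν1 hπ0 hπ1 x
      (klp γ P ν₀ π π' x))]
  apply tsum_congr
  intro t
  unfold cc
  rw [Finset.mul_sum]
  exact Finset.sum_congr rfl fun x _ => by ring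

lemma klnu_le_tsum :
    ∑ x, phi (nu γ P ν₀ π x) (nu γ P ν₀ π' x)
      ≤ ∑' t : ℕ, (1-γ)*γ^t
          * ∑ x, phi (stateDist P ν₀ π t x) (stateDist P ν₀ π' t x) := by
  have hw : ∀ t : ℕ, (0:ℝ) ≤ (1-γ)*γ^t :=
    fun t => mul_nonneg (by linarith) (pow_nonneg hγ0.le t)
  have hwne : ∀ t : ℕ, (1-γ)*γ^t ≠ 0 :=
    fun t => ne_of_gt (mul_pos (by linarith) (pow_pos hγ0 t))
  have hper : ∀ x : X, phi (nu γ P ν₀ π x) (nu γ P ν₀ π' x)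
      ≤ ∑' t : ℕ, (1-γ)*γ^t * phi (stateDist P ν₀ π t x) (stateDist P ν₀ π' t x) := by
    intro x
    rw [nu_eq_tsum hγ0 hγ1 hP0 hP1 hν0 hν1 hπ0 hπ1 x,
      nu_eq_tsum hγ0 hγ1 hP0 hP1 hν0 hν1 hπ'0 hπ'1 x]
    calc phi (∑' t : ℕ, (1-γ)*γ^t * stateDist P ν₀ π t x)
          (∑' t : ℕ, (1-γ)*γ^t * stateDist P ν₀ π' t x)
        ≤ ∑' t : ℕ, phi ((1-γ)*γ^t * stateDist P ν₀ π t x)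
            ((1-γ)*γ^t * stateDist P ν₀ π' t x) := by
          apply logsum_tsum
          · exact fun t => mul_nonneg (hw t) (sd_nonneg hν0 hπ0 hP0 t x)
          · exact fun t => mul_nonneg (hw t) (sd_nonneg hν0 hπ'0 hP0 t x)
          · intro t he
            have hd' : stateDist P ν₀ π' t x = 0 := by
              rcases mul_eq_zero.mp he with h | h
              · exact absurd h (hwne t)
              · exact h
            rw [ac_states hγ0 hγ1 hP0 hP1 hν0 hν1 hπ0 hπ1 hπ'0 hπ'1 hAC t x hd', mul_zero]
          · exact ((sd_summable hγ0 hγ1 hν0 hν1 hπ0 hπ1 hP0 hP1 x).mul_left (1-γ)).congr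
              fun t => by ring
          · exact ((sd_summable hγ0 hγ1 hν0 hν1 hπ'0 hπ'1 hP0 hP1 x).mul_left (1-γ)).congr
              fun t => by ring
          · exact (philist_summable hγ0 hγ1 hP0 hP1 hν0 hν1 hπ0 hπ1 hπ'0 hπ'1 hAC x).congr
              fun t => (phi_smul ((1-γ)*γ^t) _ _ (hw t)).symm
      _ = ∑' t : ℕ, (1-γ)*γ^t * phi (stateDist P ν₀ π t x) (stateDist P ν₀ π' t x) :=
          tsum_congr fun t => phi_smul ((1-γ)*γ^t) _ _ (hw t)
  calc ∑ x, phi (nu γ P ν₀ π x) (nu γ P ν₀ π' x)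
      ≤ ∑ x, ∑' t : ℕ, (1-γ)*γ^t * phi (stateDist P ν₀ π t x) (stateDist P ν₀ π' t x) :=
        Finset.sum_le_sum fun x _ => hper x
    _ = ∑' t : ℕ, ∑ x, (1-γ)*γ^t * phi (stateDist P ν₀ π t x) (stateDist P ν₀ π' t x) :=
        (Summable.tsum_finsetSum (fun x _ =>
          philist_summable hγ0 hγ1 hP0 hP1 hν0 hν1 hπ0 hπ1 hπ'0 hπ'1 hAC x)).symm
    _ = ∑' t : ℕ, (1-γ)*γ^t
          * ∑ x, phi (stateDist P ν₀ π t x) (stateDist P ν₀ π' t x) :=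
        tsum_congr fun t => (Finset.mul_sum _ _ _).symm

lemma klnu_le :
    ∑ x, phi (nu γ P ν₀ π x) (nu γ P ν₀ π' x)
      ≤ γ/(1-γ) * ∑ x, nu γ P ν₀ π x * klp γ P ν₀ π π' x := by
  have hw : ∀ t : ℕ, (0:ℝ) ≤ (1-γ)*γ^t :=
    fun t => mul_nonneg (by linarith) (pow_nonneg hγ0.le t)
  have hsum1 : Summable (fun t : ℕ => (1-γ)*γ^t
      * ∑ x, phi (stateDist P ν₀ π t x) (stateDist P ν₀ π' t x)) := by
    apply Summable.congr (summable_sum (s := (Finset.univ : Finset X)) (fun x _ =>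
      philist_summable hγ0 hγ1 hP0 hP1 hν0 hν1 hπ0 hπ1 hπ'0 hπ'1 hAC x))
    exact fun t => (Finset.mul_sum _ _ _).symm
  calc ∑ x, phi (nu γ P ν₀ π x) (nu γ P ν₀ π' x)
      ≤ ∑' t : ℕ, (1-γ)*γ^t
          * ∑ x, phi (stateDist P ν₀ π t x) (stateDist P ν₀ π' t x) :=
        klnu_le_tsum hγ0 hγ1 hP0 hP1 hν0 hν1 hπ0 hπ1 hπ'0 hπ'1 hAC
    _ ≤ ∑' t : ℕ, (1-γ)*γ^t * ∑ s ∈ Finset.range t, cc γ P ν₀ π π' s := by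
        apply Summable.tsum_le_tsum (fun t => mul_le_mul_of_nonneg_left
          (kl_cum hγ0 hγ1 hP0 hP1 hν0 hν1 hπ0 hπ1 hπ'0 hπ'1 hAC t) (hw t)) hsum1
          (sum_cc_summable hγ0 hγ1 hP0 hP1 hν0 hν1 hπ0 hπ1 hπ'0 hπ'1 hAC)
    _ = ∑' s : ℕ, cc γ P ν₀ π π' s * γ^(s+1) :=
        fubini hγ0 hγ1 hP0 hP1 hν0 hν1 hπ0 hπ1 hπ'0 hπ'1 hAC
    _ = γ/(1-γ) * ∑' t : ℕ, (1-γ)*γ^t * cc γ P ν₀ π π' t := by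
        rw [← tsum_mul_left]
        apply tsum_congr
        intro s
        have h1 : (1:ℝ) - γ ≠ 0 := by linarith
        field_simp
        ring
    _ = γ/(1-γ) * ∑ x, nu γ P ν₀ π x * klp γ P ν₀ π π' x := by
        rw [Hr_eq hγ0 hγ1 hP0 hP1 hν0 hν1 hπ0 hπ1 hπ'0 hπ'1 hAC]

lemma final_real :
    ∑ x, ∑ a, phi (occ γ P ν₀ π x a) (occ γ P ν₀ π' x a)
      ≤ 1/(1-γ) * ∑ x, nu γ P ν₀ π x * klp γ P ν₀ π π' x := by
  have hdecomp : ∑ x, ∑ a, phi (occ γ P ν₀ π x a) (occ γ P ν₀ π' x a)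
      = ∑ x, (phi (nu γ P ν₀ π x) (nu γ P ν₀ π' x)
          + nu γ P ν₀ π x * klp γ P ν₀ π π' x) := by
    apply Finset.sum_congr rfl
    intro x _
    have h1 : ∀ a : A, phi (occ γ P ν₀ π x a) (occ γ P ν₀ π' x a)
        = phi (nu γ P ν₀ π x * π x a) (nu γ P ν₀ π' x * π' x a) := by
      intro a; rw [occ_eq, occ_eq]
    rw [Finset.sum_congr rfl fun a _ => h1 a]
    exact chain_nu hγ0 hγ1 hP0 hP1 hν0 hν1 hπ0 hπ1 hπ'0 hπ'1 hAC x
  rw [hdecomp, Finset.sum_add_distrib]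
  have hkl := klnu_le hγ0 hγ1 hP0 hP1 hν0 hν1 hπ0 hπ1 hπ'0 hπ'1 hAC
  have hH : 0 ≤ ∑ x, nu γ P ν₀ π x * klp γ P ν₀ π π' x :=
    Finset.sum_nonneg fun x _ => mul_nonneg (nu_nonneg hγ0 hγ1 hν0 hπ0 hP0 x)
      (klp_nonneg hγ0 hγ1 hP0 hP1 hν0 hν1 hπ0 hπ1 hπ'0 hπ'1 hAC x)
  have hfrac : γ/(1-γ) + 1 = 1/(1-γ) := by
    rw [div_add' _ _ _ (by linarith : (1:ℝ)-γ ≠ 0)]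
    ring_nf
  nlinarith [hkl, hH, hfrac]

end MDP3

open Classical in
/-- Relative entropy between two (finitely supported) distributions given as functions,
valued in `[0,∞]`, with `KL(p‖q) = ∞` when `p` is not absolutely continuous w.r.t. `q`. -/
noncomputable def KLd {S : Type*} [Fintype S] (p q : S → ℝ) : ℝ≥0∞ :=
  if ∀ s, q s = 0 → p s = 0 then
    ENNReal.ofReal (∑ s, if p s = 0 then (0 : ℝ) else p s * Real.log (p s / q s))
  else ⊤

/-- The conditional relative entropy `H(π‖π') = Σ_x ν^π(x) KL(π(·|x) ‖ π'(·|x))`, where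
`ν^π(x) = Σ_a μ^π(x,a)` is the discounted state occupancy of `π`. -/
noncomputable def condKL {X A : Type*} [Fintype X] [Fintype A]
    (γ : ℝ) (P : X → A → X → ℝ) (ν₀ : X → ℝ) (π π' : X → A → ℝ) : ℝ≥0∞ :=
  ∑ x, ENNReal.ofReal (∑ a, occ γ P ν₀ π x a) * KLd (π x) (π' x)

/-- Lemma (KL between occupancies): for any two policies `π, π'`,
`KL(μ^π ‖ μ^{π'}) ≤ (1/(1−γ)) H(π ‖ π')`. -/
theorem stmt_2 {X A : Type*} [Fintype X] [Fintype A] [Nonempty X] [Nonempty A]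
    (γ : ℝ) (hγ0 : 0 < γ) (hγ1 : γ < 1)
    (P : X → A → X → ℝ) (hP0 : ∀ x a x', 0 ≤ P x a x') (hP1 : ∀ x a, ∑ x', P x a x' = 1)
    (ν₀ : X → ℝ) (hν0 : ∀ x, 0 ≤ ν₀ x) (hν1 : ∑ x, ν₀ x = 1)
    (π : X → A → ℝ) (hπ0 : ∀ x a, 0 ≤ π x a) (hπ1 : ∀ x, ∑ a, π x a = 1)
    (π' : X → A → ℝ) (hπ'0 : ∀ x a, 0 ≤ π' x a) (hπ'1 : ∀ x, ∑ a, π' x a = 1) :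
    KLd (fun p : X × A => occ γ P ν₀ π p.1 p.2) (fun p : X × A => occ γ P ν₀ π' p.1 p.2)
      ≤ ENNReal.ofReal (1 / (1 - γ)) * condKL γ P ν₀ π π' := by
  have hsa : ∀ x, ∑ a, occ γ P ν₀ π x a = nu γ P ν₀ π x := by
    intro x
    rw [Finset.sum_congr rfl fun a _ => occ_eq x a, ← Finset.mul_sum, hπ1, mul_one]
  by_cases hac : ∀ x, nu γ P ν₀ π x ≠ 0 → ∀ a, π' x a = 0 → π x a = 0
  · -- absolutely continuous case
    have hACocc : ∀ p : X × A, occ γ P ν₀ π' p.1 p.2 = 0 → occ γ P ν₀ π p.1 p.2 = 0 := by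
      rintro ⟨x, a⟩ h
      rw [occ_eq] at h ⊢
      rcases mul_eq_zero.mp h with h1 | h1
      · have h2 : nu γ P ν₀ π x = 0 := by
          by_contra hn
          exact nu_ne hγ0 hγ1 hP0 hP1 hν0 hν1 hπ0 hπ1 hπ'0 hπ'1 hac hn h1
        rw [h2, zero_mul]
      · rcases eq_or_ne (nu γ P ν₀ π x) 0 with h2 | h2
        · rw [h2, zero_mul]
        · rw [hac x h2 a h1, mul_zero]
    have hlhs : KLd (fun p : X × A => occ γ P ν₀ π p.1 p.2)
        (fun p : X × A => occ γ P ν₀ π' p.1 p.2)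
        = ENNReal.ofReal
          (∑ p : X × A, phi (occ γ P ν₀ π p.1 p.2) (occ γ P ν₀ π' p.1 p.2)) := by
      unfold KLd
      rw [if_pos hACocc]
      simp only [phi]
    have hcond : condKL γ P ν₀ π π'
        = ENNReal.ofReal (∑ x, nu γ P ν₀ π x * klp γ P ν₀ π π' x) := by
      unfold condKL
      rw [ENNReal.ofReal_sum_of_nonneg (fun x _ =>
        mul_nonneg (nu_nonneg hγ0 hγ1 hν0 hπ0 hP0 x)
          (klp_nonneg hγ0 hγ1 hP0 hP1 hν0 hν1 hπ0 hπ1 hπ'0 hπ'1 hac x))]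
      apply Finset.sum_congr rfl
      intro x _
      rw [hsa x]
      rcases eq_or_ne (nu γ P ν₀ π x) 0 with h | h
      · rw [h, ENNReal.ofReal_zero, zero_mul, zero_mul, ENNReal.ofReal_zero]
      · have hkld : KLd (π x) (π' x)
            = ENNReal.ofReal (∑ a, phi (π x a) (π' x a)) := by
          unfold KLd
          rw [if_pos (hac x h)]
          simp only [phi]
        have hklp : klp γ P ν₀ π π' x = ∑ a, phi (π x a) (π' x a) := by
          unfold klp; rw [if_neg h]
        rw [hkld, hklp, ← ENNReal.ofReal_mul (nu_nonneg hγ0 hγ1 hν0 hπ0 hP0 x)]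
    rw [hlhs, hcond, ← ENNReal.ofReal_mul (by
      have : (0:ℝ) < 1 - γ := by linarith
      positivity)]
    apply ENNReal.ofReal_le_ofReal
    calc ∑ p : X × A, phi (occ γ P ν₀ π p.1 p.2) (occ γ P ν₀ π' p.1 p.2)
        = ∑ x, ∑ a, phi (occ γ P ν₀ π x a) (occ γ P ν₀ π' x a) := by
          rw [Fintype.sum_prod_type]
      _ ≤ 1/(1-γ) * ∑ x, nu γ P ν₀ π x * klp γ P ν₀ π π' x :=
          final_real hγ0 hγ1 hP0 hP1 hν0 hν1 hπ0 hπ1 hπ'0 hπ'1 hac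
  · -- singular case: RHS is ⊤
    push_neg at hac
    obtain ⟨x, hx, a, ha1, ha2⟩ := hac
    have hcond : condKL γ P ν₀ π π' = ⊤ := by
      unfold condKL
      rw [ENNReal.sum_eq_top]
      refine ⟨x, Finset.mem_univ x, ?_⟩
      have hkld : KLd (π x) (π' x) = ⊤ := by
        unfold KLd
        rw [if_neg (fun hall => ha2 (hall a ha1))]
      rw [hkld]
      apply ENNReal.mul_top
      rw [hsa x]
      simp only [ne_eq, ENNReal.ofReal_eq_zero, not_le]
      exact lt_of_le_of_ne (nu_nonneg hγ0 hγ1 hν0 hπ0 hP0 x) (Ne.symm hx)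
    rw [hcond, ENNReal.mul_top (by
      simp only [ne_eq, ENNReal.ofReal_eq_zero, not_le]
      have : (0:ℝ) < 1 - γ := by linarith
      positivity)]
    exact le_top
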